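/- Under the Euler-scheme setting below, for every n ≥ 0 and all indices 0 ≤ r, j ≤ 2^n, ‖y(t^n_j) − y(t^n_r) − f(y(t^n_r))·(x(t^n_j) − x(t^n_r))‖ ≤ G₂·|t^n_j − t^n_r|^{2α}, where G₂ = max{ (2ω^{−α} + ω^{−1−α})·(L + hFC_α), L }, L = (4/(1 − 2^{1−2α}))·(hC_α)²·F₁·F, and ω = (hFC_α/L)^{1/α}. -/

import Mathlib

set_option maxHeartbeats 400000

noncomputable section

/-- Maximum-absolute-entry norm of a vector. -/
def vnorm {d : ℕ} (v : Fin d → ℝ) : ℝ := ⨆ i, |v i|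

/- ## Auxiliary lemmas -/

lemma vnorm_le {d : ℕ} {v : Fin d → ℝ} {C : ℝ} (hd : 0 < d) (hv : ∀ i, |v i| ≤ C) :
    vnorm v ≤ C := by
  haveI : Nonempty (Fin d) := ⟨⟨0, hd⟩⟩
  exact ciSup_le hv

lemma le_vnorm {d : ℕ} (v : Fin d → ℝ) (i : Fin d) : |v i| ≤ vnorm v := by
  unfold vnorm
  exact le_ciSup (Set.Finite.bddAbove (Set.finite_range fun i => |v i|)) i

lemma bern {c s : ℝ} (hc : 0 ≤ c) (hs : 0 ≤ s) (hs1 : s ≤ 1) :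
    c ^ s ≤ 1 - s * (1 - c) := by
  have h := Real.geom_mean_le_arith_mean2_weighted (by linarith : (0:ℝ) ≤ 1 - s) hs
    (by norm_num : (0:ℝ) ≤ 1) hc (by ring)
  simpa using h.trans_eq (by ring)

lemma expbound {s : ℝ} : 1 - s * Real.log 2 ≤ (2:ℝ) ^ (-s) := by
  rw [Real.rpow_def_of_pos (by norm_num : (0:ℝ) < 2)]
  have := Real.add_one_le_exp (Real.log 2 * (-s))
  linarith

lemma key_ineq {α s l ε : ℝ} (hα : α ≤ 1) (hsα : s = 2*α - 1)
    (hs0 : 0 < s) (hs1 : s ≤ 1) (hl : 1/3 ≤ l) (hl2 : l ≤ 1/2)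
    (hε : ε = (1 - (2:ℝ) ^ (-s))/4) :
    l ^ (2*α) + (1-l) ^ (2*α) +
      ε * ((1-l) ^ α * l ^ (2*α) + (1-l) ^ α * l ^ α) ≤ 1 := by
  have hα2 : 1/2 < α := by linarith
  have hl0 : 0 < l := by linarith
  have hm : 1/2 ≤ 1 - l := by linarith
  have hm2 : (1:ℝ) - l ≤ 2/3 := by linarith
  have hm0 : 0 < 1 - l := by linarith
  have hε0 : 0 ≤ ε := by
    have : (2:ℝ) ^ (-s) ≤ 1 :=
      Real.rpow_le_one_of_one_le_of_nonpos (by norm_num) (by linarith)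
    rw [hε]; linarith
  have hεup : ε ≤ s * Real.log 2 / 4 := by
    have := expbound (s := s)
    rw [hε]; linarith
  -- cross term ≤ 1
  have hcross : (1-l) ^ α * l ^ (2*α) + (1-l) ^ α * l ^ α ≤ 1 := by
    have h1 : l ^ (2*α) ≤ l ^ α :=
      Real.rpow_le_rpow_of_exponent_ge hl0 (by linarith) (by linarith)
    have h2 : (1-l) ^ α * l ^ α = ((1-l) * l) ^ α := (Real.mul_rpow hm0.le hl0.le).symm
    have h3 : ((1-l) * l) ^ α ≤ (1/4 : ℝ) ^ α :=
      Real.rpow_le_rpow (by positivity) (by nlinarith) (by linarith)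
    have h4 : ((1:ℝ)/4) ^ α ≤ ((1:ℝ)/4) ^ ((1:ℝ)/2) :=
      Real.rpow_le_rpow_of_exponent_ge (by norm_num) (by norm_num) hα2.le
    have h5 : ((1:ℝ)/4) ^ ((1:ℝ)/2) = 1/2 := by
      rw [show (1/4:ℝ) = (1/2)^(2:ℕ) by norm_num, ← Real.rpow_natCast ((1/2):ℝ) 2,
        ← Real.rpow_mul (by norm_num)]
      norm_num
    have hma : (1-l) ^ α ≤ 1 := Real.rpow_le_one hm0.le (by linarith) (by linarith)
    have hla : (0:ℝ) ≤ l ^ α := Real.rpow_nonneg hl0.le α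
    nlinarith [Real.rpow_nonneg hm0.le α]
  have hsplit : ∀ c : ℝ, 0 < c → c ^ (2*α) = c * c ^ s := by
    intro c hc
    rw [show 2*α = 1 + s by rw [hsα]; ring, Real.rpow_add hc, Real.rpow_one]
  have hls : l ^ s ≤ (1/2:ℝ) ^ s := Real.rpow_le_rpow hl0.le hl2 hs0.le
  have hms : (1-l) ^ s ≤ (2/3:ℝ) ^ s := Real.rpow_le_rpow hm0.le hm2 hs0.le
  have hb1 : ((1:ℝ)/2) ^ s ≤ 1 - s * (1/2) := by
    have := bern (c := 1/2) (s := s) (by norm_num) hs0.le hs1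
    linarith
  have hb2 : ((2:ℝ)/3) ^ s ≤ 1 - s * (1/3) := by
    have := bern (c := 2/3) (s := s) (by norm_num) hs0.le hs1
    linarith
  have hlog : Real.log 2 < 0.6931471808 := Real.log_two_lt_d9
  have hlog0 : 0 < Real.log 2 := Real.log_pos (by norm_num)
  have hfin : l * l ^ s + (1-l) * (1-l) ^ s + ε ≤ 1 := by
    have e1 : l * l ^ s ≤ l * (1/2:ℝ) ^ s :=
      mul_le_mul_of_nonneg_left hls hl0.le
    have e2 : (1-l) * (1-l) ^ s ≤ (1-l) * (2/3:ℝ) ^ s :=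
      mul_le_mul_of_nonneg_left hms hm0.le
    have e3 : l * (1/2:ℝ) ^ s ≤ l * (1 - s/2) :=
      mul_le_mul_of_nonneg_left (by linarith) hl0.le
    have e4 : (1-l) * (2/3:ℝ) ^ s ≤ (1-l) * (1 - s/3) :=
      mul_le_mul_of_nonneg_left (by linarith) hm0.le
    have e5 : ε ≤ s/3 := by
      have := mul_le_mul_of_nonneg_left hlog.le hs0.le
      linarith
    have f1 : s/6 ≤ l * (s/2) := by
      have := mul_nonneg (by linarith : (0:ℝ) ≤ l - 1/3) hs0.le
      nlinarith
    have f2 : s/6 ≤ (1-l) * (s/3) := by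
      have := mul_nonneg (by linarith : (0:ℝ) ≤ (1-l) - 1/2) hs0.le
      nlinarith
    linarith only [e1, e2, e3, e4, e5, f1, f2]
  have h6 : ε * ((1-l) ^ α * l ^ (2*α) + (1-l) ^ α * l ^ α) ≤ ε * 1 :=
    mul_le_mul_of_nonneg_left hcross hε0
  have h7 : l ^ (2*α) + (1-l) ^ (2*α) + ε ≤ 1 := by
    rw [hsplit l hl0, hsplit (1-l) hm0]; exact hfin
  linarith only [h6, h7]

lemma step_ineq {α L ω P Q E a b : ℝ} (hα2 : 1/2 < α) (hα1 : α ≤ 1)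
    (hL : 0 < L) (hω : 0 < ω)
    (hE : E = (1 - (2:ℝ) ^ (1 - 2*α))/4)
    (hP : P = L * ω ^ α)
    (hQ : Q * ω ^ α = E) (hQ0 : 0 ≤ Q)
    (ha : 0 ≤ a) (hb : 0 ≤ b) (hab : a + b ≤ ω)
    (h3 : a + b ≤ 3 * a) (h2 : 2 * a ≤ a + b) :
    L * a ^ (2*α) + L * b ^ (2*α) + Q * b ^ α * (L * a ^ (2*α) + P * a ^ α)
      ≤ L * (a+b) ^ (2*α) := by
  have h2α : (0:ℝ) < 2*α := by linarith
  rcases eq_or_lt_of_le (add_nonneg ha hb) with h0 | hδ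
  · have ha0 : a = 0 := by linarith
    have hb0 : b = 0 := by linarith
    simp [ha0, hb0, Real.zero_rpow (ne_of_gt h2α), Real.zero_rpow (by linarith : α ≠ 0)]
  · obtain ⟨l, hld⟩ : ∃ l, l = a/(a+b) := ⟨_, rfl⟩
    obtain ⟨δ, hδd⟩ : ∃ δ, δ = a+b := ⟨_, rfl⟩
    have hδ0 : 0 < δ := hδd ▸ hδ
    have ha' : a = l * δ := by rw [hld, hδd]; field_simp
    have hb' : b = (1-l) * δ := by rw [hld, hδd]; field_simp; ring
    have hl1 : 1/3 ≤ l := by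
      rw [hld, le_div_iff₀ hδ]; linarith
    have hl2 : l ≤ 1/2 := by
      rw [hld, div_le_iff₀ hδ]; linarith
    have hl0 : (0:ℝ) ≤ l := by linarith
    have hm0 : (0:ℝ) ≤ 1 - l := by linarith
    have hδω : δ ≤ ω := by rw [hδd]; exact hab
    rw [ha', hb', show l*δ + (1-l)*δ = δ by ring]
    simp only [Real.mul_rpow hl0 hδ0.le, Real.mul_rpow hm0 hδ0.le]
    have hδδ : δ ^ (2*α) = δ ^ α * δ ^ α := by
      rw [← Real.rpow_add hδ0]; ring_nf
    have hkey := key_ineq hα1 rfl (by linarith) (by linarith) hl1 hl2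
      (show E = _ by rw [hE]; norm_num)
    have hE0 : 0 ≤ E := by
      rw [← hQ]; exact mul_nonneg hQ0 (Real.rpow_nonneg hω.le α)
    have hu0 : (0:ℝ) ≤ δ ^ α := Real.rpow_nonneg hδ0.le α
    have hc1 : Q * δ ^ α ≤ E := by
      rw [← hQ]
      exact mul_le_mul_of_nonneg_left (Real.rpow_le_rpow hδ0.le hδω (by linarith)) hQ0
    have hX : (0:ℝ) ≤ l ^ (2*α) := Real.rpow_nonneg hl0 _
    have hXa : (0:ℝ) ≤ l ^ α := Real.rpow_nonneg hl0 _
    have hM : (0:ℝ) ≤ (1-l) ^ α := Real.rpow_nonneg hm0 _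
    calc L * (l ^ (2*α) * δ ^ (2*α)) + L * ((1-l) ^ (2*α) * δ ^ (2*α)) +
          Q * ((1-l) ^ α * δ ^ α) * (L * (l ^ (2*α) * δ ^ (2*α)) + P * (l ^ α * δ ^ α))
        = L * (δ ^ α * δ ^ α) * (l ^ (2*α) + (1-l) ^ (2*α))
          + (L * (δ ^ α * δ ^ α) * ((1-l) ^ α * l ^ (2*α))) * (Q * δ ^ α)
          + (L * (δ ^ α * δ ^ α) * ((1-l) ^ α * l ^ α)) * (Q * ω ^ α) := by
          rw [hδδ, hP]; ring
      _ ≤ L * (δ ^ α * δ ^ α) * (l ^ (2*α) + (1-l) ^ (2*α))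
          + (L * (δ ^ α * δ ^ α) * ((1-l) ^ α * l ^ (2*α))) * E
          + (L * (δ ^ α * δ ^ α) * ((1-l) ^ α * l ^ α)) * E := by
          rw [hQ]
          have := mul_le_mul_of_nonneg_left hc1
            (by positivity : (0:ℝ) ≤ L * (δ ^ α * δ ^ α) * ((1-l) ^ α * l ^ (2*α)))
          nlinarith [this]
      _ = L * (δ ^ α * δ ^ α) *
            (l ^ (2*α) + (1-l) ^ (2*α) + E * ((1-l) ^ α * l ^ (2*α) + (1-l) ^ α * l ^ α)) := by
          ring
      _ ≤ L * (δ ^ α * δ ^ α) * 1 := by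
          apply mul_le_mul_of_nonneg_left hkey (by positivity)
      _ = L * δ ^ (2*α) := by rw [hδδ]; ring

lemma big_arith {α ω δ : ℝ} (hα2 : 1/2 < α) (hα1 : α ≤ 1) (hω : 0 < ω)
    (hδω : ω < δ) (hδ1 : δ ≤ 1) :
    δ * ω^(α-1) ≤ ω^(-α) * δ^(2*α) ∧ δ^α ≤ ω^(-1-α) * δ^(2*α) ∧ ω^α ≤ δ^α := by
  have hδ0 : 0 < δ := lt_trans hω hδω
  have hω1 : ω < 1 := lt_of_lt_of_le hδω hδ1
  have hα0 : (0:ℝ) < α := by linarith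
  have c3 : ω^α ≤ δ^α := Real.rpow_le_rpow hω.le hδω.le hα0.le
  have hδ2α : δ^(2*α) = δ * δ^(2*α-1) := by
    have h := Real.rpow_add hδ0 1 (2*α-1)
    rw [show (1:ℝ)+(2*α-1) = 2*α by ring] at h
    rw [h, Real.rpow_one]
  refine ⟨?_, ?_, c3⟩
  · rw [Real.rpow_neg hω.le, inv_mul_eq_div, le_div_iff₀ (Real.rpow_pos_of_pos hω α)]
    calc δ * ω^(α-1) * ω^α = δ * ω^(2*α-1) := by
          rw [mul_assoc, ← Real.rpow_add hω]; ring_nf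
      _ ≤ δ * δ^(2*α-1) := by
          apply mul_le_mul_of_nonneg_left
            (Real.rpow_le_rpow hω.le hδω.le (by linarith)) hδ0.le
      _ = δ^(2*α) := hδ2α.symm
  · rw [show (-1:ℝ)-α = -(1+α) by ring, Real.rpow_neg hω.le, inv_mul_eq_div,
      le_div_iff₀ (Real.rpow_pos_of_pos hω _)]
    have h1 : ω^(1+α) = ω * ω^α := by
      rw [Real.rpow_add hω, Real.rpow_one]
    have h2 : ω * ω^α ≤ δ^α := by
      nlinarith [Real.rpow_pos_of_pos hω α]
    have h3 : δ^α * δ^α = δ^(2*α) := by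
      rw [← Real.rpow_add hδ0]; ring_nf
    calc δ^α * ω^(1+α) ≤ δ^α * δ^α := by
          rw [h1]
          exact mul_le_mul_of_nonneg_left h2 (Real.rpow_nonneg hδ0.le α)
      _ = δ^(2*α) := h3

lemma tmem {n k : ℕ} (hk : k ≤ 2^n) : ((k:ℝ)/2^n) ∈ Set.Icc (0:ℝ) 1 := by
  constructor
  · positivity
  · rw [div_le_one (by positivity)]
    exact_mod_cast hk

lemma sumbound {h : ℕ} {α Cα : ℝ} {x : ℝ → Fin h → ℝ}
    (hx : ∀ s t : ℝ, s ∈ Set.Icc (0:ℝ) 1 → t ∈ Set.Icc (0:ℝ) 1 →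
      vnorm (fun j => x s j - x t j) ≤ Cα * |s - t| ^ α)
    {g : Fin h → ℝ} {G : ℝ} (hG0 : 0 ≤ G) (hg : ∀ l, |g l| ≤ G)
    {s t : ℝ} (hs : s ∈ Set.Icc (0:ℝ) 1) (ht : t ∈ Set.Icc (0:ℝ) 1) :
    |∑ l, g l * (x s l - x t l)| ≤ (h:ℝ) * G * (Cα * |s - t| ^ α) := by
  have hxl : ∀ l, |x s l - x t l| ≤ Cα * |s - t| ^ α := fun l =>
    le_trans (le_vnorm (fun j => x s j - x t j) l) (hx s t hs ht)
  calc |∑ l, g l * (x s l - x t l)| ≤ ∑ l, |g l * (x s l - x t l)| :=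
        Finset.abs_sum_le_sum_abs _ _
    _ ≤ ∑ _l : Fin h, G * (Cα * |s - t| ^ α) := by
        apply Finset.sum_le_sum
        intro l _
        rw [abs_mul]
        exact mul_le_mul (hg l) (hxl l) (abs_nonneg _) hG0
    _ = (h:ℝ) * G * (Cα * |s - t| ^ α) := by
        rw [Finset.sum_const, Finset.card_univ, Fintype.card_fin, nsmul_eq_mul]
        ring

def Phi {d h : ℕ} (x : ℝ → Fin h → ℝ) (f : (Fin d → ℝ) → Fin d → Fin h → ℝ)
    (y : ℕ → ℕ → Fin d → ℝ) (n r j : ℕ) (i : Fin d) : ℝ :=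
  y n j i - y n r i - ∑ l, f (y n r) i l * (x ((j:ℝ)/2^n) l - x ((r:ℝ)/2^n) l)

lemma phi_chen {d h : ℕ} (x : ℝ → Fin h → ℝ) (f : (Fin d → ℝ) → Fin d → Fin h → ℝ)
    (y : ℕ → ℕ → Fin d → ℝ) (n r m j : ℕ) (i : Fin d) :
    Phi x f y n r j i = Phi x f y n r m i + Phi x f y n m j i +
      ∑ l, (f (y n m) i l - f (y n r) i l) * (x ((j:ℝ)/2^n) l - x ((m:ℝ)/2^n) l) := by
  simp only [Phi, sub_mul, mul_sub, Finset.sum_sub_distrib]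
  ring

lemma phi_rev {d h : ℕ} (x : ℝ → Fin h → ℝ) (f : (Fin d → ℝ) → Fin d → Fin h → ℝ)
    (y : ℕ → ℕ → Fin d → ℝ) (n r j : ℕ) (i : Fin d) :
    Phi x f y n r j i = - Phi x f y n j r i +
      ∑ l, (f (y n j) i l - f (y n r) i l) * (x ((j:ℝ)/2^n) l - x ((r:ℝ)/2^n) l) := by
  simp only [Phi, sub_mul, mul_sub, Finset.sum_sub_distrib]
  ring

lemma ydiff_eq {d h : ℕ} (x : ℝ → Fin h → ℝ) (f : (Fin d → ℝ) → Fin d → Fin h → ℝ)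
    (y : ℕ → ℕ → Fin d → ℝ) (n a b : ℕ) (i : Fin d) :
    y n b i - y n a i = Phi x f y n a b i +
      ∑ l, f (y n a) i l * (x ((b:ℝ)/2^n) l - x ((a:ℝ)/2^n) l) := by
  simp [Phi]

lemma phi_unit {d h : ℕ} (x : ℝ → Fin h → ℝ) (f : (Fin d → ℝ) → Fin d → Fin h → ℝ)
    (y : ℕ → ℕ → Fin d → ℝ)
    (hyrec : ∀ n k : ℕ, k < 2 ^ n → ∀ i,
      y n (k + 1) i = y n k i +
        ∑ j, f (y n k) i j * (x (((k:ℝ) + 1) / 2 ^ n) j - x ((k:ℝ) / 2 ^ n) j))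
    {n k : ℕ} (hk : k < 2^n) (i : Fin d) : Phi x f y n k (k+1) i = 0 := by
  have hr := hyrec n k hk i
  simp only [Phi]
  push_cast
  rw [hr]
  ring

lemma chain {d : ℕ} (y : ℕ → ℕ → Fin d → ℝ) (n q : ℕ) (M : ℝ) (hM : 0 ≤ M)
    (hpiece : ∀ a p : ℕ, a + p ≤ 2^n → p ≤ q → ∀ i, |y n (a+p) i - y n a i| ≤ M) :
    ∀ N r k : ℕ, k ≤ N*q → r + k ≤ 2^n → ∀ i, |y n (r+k) i - y n r i| ≤ N * M := by
  intro N
  induction N with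
  | zero =>
    intro r k hk hrk i
    obtain rfl : k = 0 := by simpa using hk
    simp
  | succ N IH =>
    intro r k hk hrk i
    by_cases hkq : k ≤ q
    · refine le_trans (hpiece r k hrk hkq i) ?_
      push_cast
      nlinarith [Nat.cast_nonneg (α := ℝ) N]
    · push_neg at hkq
      have hsplit : r + k = (r + q) + (k - q) := by omega
      have h1 : |y n (r+q) i - y n r i| ≤ M := hpiece r q (by omega) le_rfl i
      have h2 : |y n ((r+q)+(k-q)) i - y n (r+q) i| ≤ N * M :=
        IH (r+q) (k-q) (by rw [Nat.succ_mul] at hk; omega) (by omega) i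
      rw [hsplit]
      calc |y n ((r+q)+(k-q)) i - y n r i|
          ≤ |y n ((r+q)+(k-q)) i - y n (r+q) i| + |y n (r+q) i - y n r i| := by
            have := abs_sub_le (y n ((r+q)+(k-q)) i) (y n (r+q) i) (y n r i)
            linarith
        _ ≤ N * M + M := add_le_add h2 h1
        _ = (N+1 : ℕ) * M := by push_cast; ring

lemma nq_ineq {k q : ℝ} (hq : 1 ≤ q) (hk : q + 1 ≤ k) :
    (k - 1)/q + 1 ≤ 2*k/(q+1) := by
  have hq0 : 0 < q := by linarith
  rw [div_add' _ _ _ (ne_of_gt hq0), div_le_div_iff₀ hq0 (by linarith)]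
  nlinarith [mul_nonneg (by linarith : (0:ℝ) ≤ k - (q+1)) (by linarith : (0:ℝ) ≤ q - 1)]

/-- Lemma (second-order a priori bound for the Euler scheme): under the Euler-scheme
setting, `‖y(t^n_j) − y(t^n_r) − f(y(t^n_r))·(x(t^n_j) − x(t^n_r))‖ ≤ G₂·|t^n_j − t^n_r|^{2α}`
with `G₂ = max{(2ω^{−α} + ω^{−1−α})·(L + hFC_α), L}`, `L = (4/(1 − 2^{1−2α}))·(hC_α)²·F₁·F`,
`ω = (hFC_α/L)^{1/α}`. -/
theorem stmt14 (d h : ℕ) (hd : 0 < d) (hh : 0 < h)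
    (α Cα F F₁ : ℝ) (hα : 1/2 < α) (hα1 : α ≤ 1) (hCα : 0 < Cα)
    (x : ℝ → Fin h → ℝ)
    (hx : ∀ s t : ℝ, s ∈ Set.Icc (0:ℝ) 1 → t ∈ Set.Icc (0:ℝ) 1 →
      vnorm (fun j => x s j - x t j) ≤ Cα * |s - t| ^ α)
    (f : (Fin d → ℝ) → Fin d → Fin h → ℝ)
    (hfb : ∀ y i j, |f y i j| ≤ F)
    (hfl : ∀ y z i j, |f y i j - f z i j| ≤ F₁ * vnorm (fun l => y l - z l))
    (y0 : Fin d → ℝ) (y : ℕ → ℕ → Fin d → ℝ)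
    (hy0 : ∀ n, y n 0 = y0)
    (hyrec : ∀ n k : ℕ, k < 2 ^ n → ∀ i,
      y n (k + 1) i = y n k i +
        ∑ j, f (y n k) i j * (x (((k:ℝ) + 1) / 2 ^ n) j - x ((k:ℝ) / 2 ^ n) j))
    (L ω G₂ : ℝ)
    (hL : L = 4 / (1 - (2:ℝ) ^ (1 - 2 * α)) * ((h:ℝ) * Cα) ^ 2 * F₁ * F)
    (hω : ω = ((h:ℝ) * F * Cα / L) ^ (1/α))
    (hG : G₂ = max ((2 * ω ^ (-α) + ω ^ (-1 - α)) * (L + (h:ℝ) * F * Cα)) L) :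
    ∀ n r j : ℕ, r ≤ 2 ^ n → j ≤ 2 ^ n →
      vnorm (fun i => y n j i - y n r i -
          ∑ l, f (y n r) i l * (x ((j:ℝ) / 2 ^ n) l - x ((r:ℝ) / 2 ^ n) l)) ≤
        G₂ * |(j:ℝ) / 2 ^ n - (r:ℝ) / 2 ^ n| ^ (2 * α) := by
  haveI hne : Nonempty (Fin d) := ⟨⟨0, hd⟩⟩
  have h2α0 : (0:ℝ) < 2*α := by linarith
  have hα0 : (0:ℝ) < α := by linarith
  have hF0 : 0 ≤ F := le_trans (abs_nonneg _) (hfb y0 ⟨0,hd⟩ ⟨0,hh⟩)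
  have hF₁0 : 0 ≤ F₁ := by
    have h1 := hfl (fun _ => 1) (fun _ => 0) ⟨0,hd⟩ ⟨0,hh⟩
    have h2 : vnorm (fun l : Fin d => ((1:ℝ) - 0)) = 1 := by
      simp [vnorm]
    simp only [h2, mul_one] at h1
    exact le_trans (abs_nonneg _) h1
  intro n r j hr hj
  refine vnorm_le hd fun i => ?_
  show |Phi x f y n r j i| ≤ G₂ * |(j:ℝ) / 2 ^ n - (r:ℝ) / 2 ^ n| ^ (2 * α)
  -- degenerate case F = 0
  rcases eq_or_lt_of_le hF0 with hFz | hFpos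
  · have hf0 : ∀ z i' l, f z i' l = 0 := fun z i' l =>
      abs_eq_zero.mp (le_antisymm (hFz ▸ hfb z i' l) (abs_nonneg _))
    have hyc : ∀ k : ℕ, k ≤ 2^n → ∀ i', y n k i' = y n 0 i' := by
      intro k
      induction k with
      | zero => intro _ i'; rfl
      | succ k IH =>
        intro hk1 i'
        rw [hyrec n k (by omega) i', IH (by omega) i']
        simp [hf0]
    have hphi : Phi x f y n r j i = 0 := by
      simp [Phi, hf0, hyc j hj i, hyc r hr i]
    have hL0 : L = 0 := by rw [hL, ← hFz, mul_zero]
    have hG₂0 : (0:ℝ) ≤ G₂ := by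
      rw [hG]; exact le_trans (le_of_eq hL0.symm) (le_max_right _ _)
    rw [hphi, abs_zero]
    exact mul_nonneg hG₂0 (Real.rpow_nonneg (abs_nonneg _) _)
  rcases eq_or_lt_of_le hF₁0 with hF₁z | hF₁pos
  -- degenerate case F₁ = 0
  · have hfc : ∀ a b : Fin d → ℝ, ∀ i' l, f a i' l = f b i' l := by
      intro a b i' l
      have h1 := hfl a b i' l
      rw [← hF₁z, zero_mul] at h1
      exact sub_eq_zero.mp (abs_eq_zero.mp (le_antisymm h1 (abs_nonneg _)))
    have hform : ∀ k : ℕ, k ≤ 2^n → ∀ i', y n k i' = y n 0 i' +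
        ∑ l, f y0 i' l * (x ((k:ℝ)/2^n) l - x ((0:ℝ)/2^n) l) := by
      intro k
      induction k with
      | zero => intro _ i'; simp
      | succ k IH =>
        intro hk1 i'
        rw [hyrec n k (by omega) i', IH (by omega) i']
        have hf' : ∀ l, f (y n k) i' l = f y0 i' l := fun l => hfc _ _ i' l
        simp only [hf']
        push_cast
        have hc : ∑ l, f y0 i' l * (x ((k:ℝ)/2^n) l - x ((0:ℝ)/2^n) l) +
            ∑ l, f y0 i' l * (x (((k:ℝ)+1)/2^n) l - x ((k:ℝ)/2^n) l) =
            ∑ l, f y0 i' l * (x (((k:ℝ)+1)/2^n) l - x ((0:ℝ)/2^n) l) := by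
          rw [← Finset.sum_add_distrib]
          apply Finset.sum_congr rfl
          intro l _
          ring
        linarith [hc]
    have hphi : Phi x f y n r j i = 0 := by
      simp only [Phi, hform j hj i, hform r hr i]
      have hf' : ∀ l, f (y n r) i l = f y0 i l := fun l => hfc _ _ i l
      simp only [hf']
      have hc : ∑ l, f y0 i l * (x ((j:ℝ)/2^n) l - x ((0:ℝ)/2^n) l) -
          ∑ l, f y0 i l * (x ((r:ℝ)/2^n) l - x ((0:ℝ)/2^n) l) -
          ∑ l, f y0 i l * (x ((j:ℝ)/2^n) l - x ((r:ℝ)/2^n) l) = 0 := by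
        rw [← Finset.sum_sub_distrib, ← Finset.sum_sub_distrib]
        apply Finset.sum_eq_zero
        intro l _
        ring
      linarith [hc]
    have hL0 : L = 0 := by rw [hL, ← hF₁z, mul_zero, zero_mul]
    have hG₂0 : (0:ℝ) ≤ G₂ := by
      rw [hG]; exact le_trans (le_of_eq hL0.symm) (le_max_right _ _)
    rw [hphi, abs_zero]
    exact mul_nonneg hG₂0 (Real.rpow_nonneg (abs_nonneg _) _)
  -- main case : F > 0 and F₁ > 0
  · obtain ⟨E, hE⟩ : ∃ E, E = (1 - (2:ℝ)^(1-2*α))/4 := ⟨_, rfl⟩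
    have h2a : (2:ℝ)^(1-2*α) < 1 :=
      Real.rpow_lt_one_of_one_lt_of_neg one_lt_two (by linarith)
    have h2a0 : (0:ℝ) < (2:ℝ)^(1-2*α) := Real.rpow_pos_of_pos two_pos _
    have hE0 : 0 < E := by rw [hE]; linarith
    have hE4 : E ≤ 1/4 := by rw [hE]; linarith
    have h4E : 1 - (2:ℝ)^(1-2*α) = 4*E := by rw [hE]; ring
    have hhR : (0:ℝ) < h := by exact_mod_cast hh
    have hPpos : 0 < (h:ℝ)*F*Cα := mul_pos (mul_pos hhR hFpos) hCα
    have hQ0 : (0:ℝ) ≤ (h:ℝ)*F₁*Cα := mul_nonneg (mul_nonneg hhR.le hF₁0) hCα.le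
    have hL0 : 0 < L := by
      rw [hL, h4E]
      exact mul_pos (mul_pos (mul_pos (div_pos (by norm_num) (by linarith))
        (pow_pos (mul_pos hhR hCα) 2)) hF₁pos) hFpos
    have hω0 : 0 < ω := by
      rw [hω]; exact Real.rpow_pos_of_pos (div_pos hPpos hL0) _
    have hωα : ω^α = (h:ℝ)*F*Cα/L := by
      rw [hω, ← Real.rpow_mul (div_nonneg hPpos.le hL0.le),
        one_div_mul_cancel (ne_of_gt hα0), Real.rpow_one]
    have hPL : (h:ℝ)*F*Cα = L * ω^α := by rw [hωα]; field_simp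
    have hLE : E * L = (((h:ℝ)*Cα)^2*F₁)*F := by
      rw [hL, h4E]; field_simp
    have hQω : ((h:ℝ)*F₁*Cα) * ω^α = E := by
      rw [hωα, mul_div_assoc']
      rw [div_eq_iff (ne_of_gt hL0)]
      linear_combination -hLE
    have hQP : ((h:ℝ)*F₁*Cα)*((h:ℝ)*F*Cα) = E*L := by
      rw [hPL]
      linear_combination L * hQω
    -- the small-scale estimate, by strong induction on the gap
    have small : ∀ k n' r' : ℕ, r' + k ≤ 2^n' → (k:ℝ)/2^n' ≤ ω →
        ∀ i', |Phi x f y n' r' (r'+k) i'| ≤ L*((k:ℝ)/2^n')^(2*α) := by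
      intro k
      induction k using Nat.strong_induction_on with
      | _ k IH =>
      intro n' r' hrk hkω i'
      have h2pos : (0:ℝ) < 2^n' := by positivity
      rcases Nat.lt_or_ge k 2 with hk2 | hk2
      · interval_cases k
        · simp [Phi, Real.zero_rpow (ne_of_gt h2α0)]
        · rw [phi_unit x f y hyrec (by omega : r' < 2^n') i', abs_zero]
          exact mul_nonneg hL0.le (Real.rpow_nonneg (by positivity) _)
      · have hcast1 : ((k/2 : ℕ):ℝ) ≤ (k:ℝ) := by exact_mod_cast Nat.div_le_self k 2
        have hcast2 : ((k - k/2 : ℕ):ℝ) ≤ (k:ℝ) := by exact_mod_cast Nat.sub_le k (k/2)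
        have hδ₁ω : ((k/2:ℕ):ℝ)/2^n' ≤ ω :=
          le_trans ((div_le_div_iff_of_pos_right h2pos).mpr hcast1) hkω
        have hδ₂ω : ((k - k/2:ℕ):ℝ)/2^n' ≤ ω :=
          le_trans ((div_le_div_iff_of_pos_right h2pos).mpr hcast2) hkω
        have IH1 := IH (k/2) (by omega) n' r' (by omega) hδ₁ω
        have IH2 := IH (k - k/2) (by omega) n' (r' + k/2) (by omega) hδ₂ω
        have hmk : (r' + k/2) + (k - k/2) = r' + k := by omega
        rw [hmk] at IH2
        have hδ₁0 : (0:ℝ) ≤ ((k/2:ℕ):ℝ)/2^n' := by positivity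
        have hδ₂0 : (0:ℝ) ≤ ((k - k/2:ℕ):ℝ)/2^n' := by positivity
        -- increment bound on the first half
        have habs1 : |((r' + k/2:ℕ):ℝ)/2^n' - ((r':ℕ):ℝ)/2^n'| = ((k/2:ℕ):ℝ)/2^n' := by
          rw [show ((r' + k/2:ℕ):ℝ)/2^n' - ((r':ℕ):ℝ)/2^n' = ((k/2:ℕ):ℝ)/2^n' by
            push_cast; ring]
          exact abs_of_nonneg hδ₁0
        have hyd : ∀ i'', |y n' (r' + k/2) i'' - y n' r' i''| ≤
            L*(((k/2:ℕ):ℝ)/2^n')^(2*α) + ((h:ℝ)*F*Cα)*(((k/2:ℕ):ℝ)/2^n')^α := by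
          intro i''
          rw [ydiff_eq x f y n' r' (r' + k/2) i'']
          have hs1 := sumbound hx hF0 (fun l => hfb (y n' r') i'' l)
            (tmem (show r' + k/2 ≤ 2^n' by omega)) (tmem (show r' ≤ 2^n' by omega))
          rw [habs1] at hs1
          refine le_trans (abs_add_le _ _) ?_
          have hA := IH1 i''
          linarith only [hA, hs1]
        -- cross term bound
        have hcrG0 : (0:ℝ) ≤ F₁ * (L*(((k/2:ℕ):ℝ)/2^n')^(2*α) +
            ((h:ℝ)*F*Cα)*(((k/2:ℕ):ℝ)/2^n')^α) :=
          mul_nonneg hF₁0 (add_nonneg (mul_nonneg hL0.le (Real.rpow_nonneg hδ₁0 _))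
            (mul_nonneg hPpos.le (Real.rpow_nonneg hδ₁0 _)))
        have habs2 : |((r' + k:ℕ):ℝ)/2^n' - ((r' + k/2:ℕ):ℝ)/2^n'|
            = ((k - k/2:ℕ):ℝ)/2^n' := by
          rw [show ((r' + k:ℕ):ℝ)/2^n' - ((r' + k/2:ℕ):ℝ)/2^n' = ((k - k/2:ℕ):ℝ)/2^n' by
            rw [Nat.cast_sub (Nat.div_le_self k 2)]; push_cast; ring]
          exact abs_of_nonneg hδ₂0
        have hcr := sumbound hx hcrG0
          (fun l => le_trans (hfl (y n' (r' + k/2)) (y n' r') i' l)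
            (mul_le_mul_of_nonneg_left (vnorm_le hd hyd) hF₁0))
          (tmem (show r' + k ≤ 2^n' from hrk)) (tmem (show r' + k/2 ≤ 2^n' by omega))
        rw [habs2] at hcr
        -- assemble via the Chen relation and the step inequality
        have hsum : ((k/2:ℕ):ℝ)/2^n' + ((k - k/2:ℕ):ℝ)/2^n' = (k:ℝ)/2^n' := by
          rw [← add_div]
          congr 1
          exact_mod_cast (show k/2 + (k - k/2) = k by omega)
        have hn3 : (k:ℝ) ≤ 3*((k/2:ℕ):ℝ) := by exact_mod_cast (show k ≤ 3*(k/2) by omega)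
        have hn2 : 2*((k/2:ℕ):ℝ) ≤ (k:ℝ) := by exact_mod_cast (show 2*(k/2) ≤ k by omega)
        have hstep := step_ineq (a := ((k/2:ℕ):ℝ)/2^n') (b := ((k - k/2:ℕ):ℝ)/2^n')
          hα hα1 hL0 hω0 hE hPL hQω hQ0 hδ₁0 hδ₂0
          (by rw [hsum]; exact hkω)
          (by
            rw [hsum]
            calc (k:ℝ)/2^n' ≤ (3*((k/2:ℕ):ℝ))/2^n' := (div_le_div_iff_of_pos_right h2pos).mpr hn3
              _ = 3*(((k/2:ℕ):ℝ)/2^n') := by ring)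
          (by
            rw [hsum]
            calc 2*(((k/2:ℕ):ℝ)/2^n') = (2*((k/2:ℕ):ℝ))/2^n' := by ring
              _ ≤ (k:ℝ)/2^n' := (div_le_div_iff_of_pos_right h2pos).mpr hn2)
        rw [hsum] at hstep
        rw [phi_chen x f y n' r' (r' + k/2) (r'+k) i']
        refine le_trans (abs_add_le _ _) ?_
        refine le_trans (add_le_add_left (abs_add_le _ _) _) ?_
        have hA := IH1 i'
        have hB := IH2 i'
        linarith only [hA, hB, hcr, hstep]
    -- y-increment bound on small scales
    have ydiff_small : ∀ k n' r' : ℕ, r' + k ≤ 2^n' → (k:ℝ)/2^n' ≤ ω → ∀ i',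
        |y n' (r'+k) i' - y n' r' i'| ≤
          L*((k:ℝ)/2^n')^(2*α) + ((h:ℝ)*F*Cα)*((k:ℝ)/2^n')^α := by
      intro k n' r' hrk hkω i'
      have h2pos : (0:ℝ) < (2:ℝ)^n' := by positivity
      have hδ0 : (0:ℝ) ≤ (k:ℝ)/2^n' := by positivity
      rw [ydiff_eq x f y n' r' (r'+k) i']
      have habs : |((r'+k:ℕ):ℝ)/2^n' - ((r':ℕ):ℝ)/2^n'| = (k:ℝ)/2^n' := by
        rw [show ((r'+k:ℕ):ℝ)/2^n' - ((r':ℕ):ℝ)/2^n' = (k:ℝ)/2^n' by push_cast; ring]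
        exact abs_of_nonneg hδ0
      have hs1 := sumbound hx hF0 (fun l => hfb (y n' r') i' l)
        (tmem hrk) (tmem (show r' ≤ 2^n' by omega))
      rw [habs] at hs1
      refine le_trans (abs_add_le _ _) ?_
      have hA := small k n' r' hrk hkω i'
      linarith only [hA, hs1]
    -- y-increment bound on large scales
    have big : ∀ k n' r' : ℕ, r' + k ≤ 2^n' → ω < (k:ℝ)/2^n' → ∀ i',
        |y n' (r'+k) i' - y n' r' i'| ≤
          2*(L+(h:ℝ)*F*Cα) * (ω^(-α) * ((k:ℝ)/2^n')^(2*α)) := by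
      intro k n' r' hrk hbig i'
      have h2pos : (0:ℝ) < (2:ℝ)^n' := by positivity
      have hδ1 : (k:ℝ)/2^n' ≤ 1 := by
        rw [div_le_one h2pos]; exact_mod_cast (show k ≤ 2^n' by omega)
      have hδpos : 0 < (k:ℝ)/2^n' := lt_trans hω0 hbig
      have hω1 : ω < 1 := lt_of_lt_of_le hbig hδ1
      obtain ⟨ba1, ba2, ba3⟩ := big_arith hα hα1 hω0 hbig hδ1
      have hK0 : (0:ℝ) ≤ L + (h:ℝ)*F*Cα := add_nonneg hL0.le hPpos.le
      have hkbig : ω * 2^n' < (k:ℝ) := by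
        rw [lt_div_iff₀ h2pos] at hbig; linarith
      rcases le_or_gt 1 (ω * 2^n') with hc | hc
      · -- steps of size q = ⌊ω 2^n⌋
        obtain ⟨q, hqd⟩ : ∃ q, q = Nat.floor (ω * (2:ℝ)^n') := ⟨_, rfl⟩
        have hq1 : 1 ≤ q := by
          rw [hqd]; exact Nat.le_floor (by exact_mod_cast hc)
        have hqle : (q:ℝ) ≤ ω * 2^n' := by
          rw [hqd]; exact Nat.floor_le (by positivity)
        have hqgt : ω * 2^n' < (q:ℝ) + 1 := by
          rw [hqd]; exact Nat.lt_floor_add_one _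
        have hqk : q + 1 ≤ k := by
          have h1 : (q:ℝ) < (k:ℝ) := lt_of_le_of_lt hqle hkbig
          have h2 : q < k := by exact_mod_cast h1
          omega
        have hqω : (q:ℝ)/2^n' ≤ ω := by rw [div_le_iff₀ h2pos]; exact hqle
        have hqδ1 : (q:ℝ)/2^n' ≤ 1 := le_trans hqω hω1.le
        have hqpos : (0:ℝ) < (q:ℝ)/2^n' :=
          div_pos (by exact_mod_cast (show 0 < q by omega)) h2pos
        have hpiece : ∀ a p : ℕ, a + p ≤ 2^n' → p ≤ q → ∀ i'',
            |y n' (a+p) i'' - y n' a i''| ≤ (L+(h:ℝ)*F*Cα) * ((q:ℝ)/2^n')^α := by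
          intro a p hap hpq i''
          have hpq' : ((p:ℕ):ℝ)/2^n' ≤ ((q:ℕ):ℝ)/2^n' :=
            (div_le_div_iff_of_pos_right h2pos).mpr (by exact_mod_cast hpq)
          have hpω : (p:ℝ)/2^n' ≤ ω := le_trans hpq' hqω
          refine le_trans (ydiff_small p n' a hap hpω i'') ?_
          have m1 : ((p:ℝ)/2^n')^(2*α) ≤ ((q:ℝ)/2^n')^(2*α) :=
            Real.rpow_le_rpow (by positivity) hpq' h2α0.le
          have m2 : ((q:ℝ)/2^n')^(2*α) ≤ ((q:ℝ)/2^n')^α :=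
            Real.rpow_le_rpow_of_exponent_ge hqpos hqδ1 (by linarith)
          have m3 : ((p:ℝ)/2^n')^α ≤ ((q:ℝ)/2^n')^α :=
            Real.rpow_le_rpow (by positivity) hpq' hα0.le
          have n1 := mul_le_mul_of_nonneg_left (le_trans m1 m2) hL0.le
          have n2 := mul_le_mul_of_nonneg_left m3 hPpos.le
          linarith only [n1, n2]
        obtain ⟨N, hNd⟩ : ∃ N, N = (k-1)/q + 1 := ⟨_, rfl⟩
        have hkN : k ≤ N * q := by
          rw [hNd]
          have h1 := Nat.div_add_mod (k-1) q
          have h2 : (k-1) % q < q := Nat.mod_lt _ (show 0 < q by omega)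
          have h3 : (k-1) < ((k-1)/q + 1) * q := by
            calc (k-1) = q*((k-1)/q) + (k-1)%q := h1.symm
              _ < q*((k-1)/q) + q := Nat.add_lt_add_left h2 _
              _ = ((k-1)/q + 1)*q := by ring
          exact Nat.le_of_pred_lt h3
        have hM0 : (0:ℝ) ≤ (L+(h:ℝ)*F*Cα) * ((q:ℝ)/2^n')^α :=
          mul_nonneg hK0 (Real.rpow_nonneg (by positivity) _)
        have hch := chain y n' q _ hM0 hpiece N r' k hkN hrk i'
        refine le_trans hch ?_
        have hqR : (0:ℝ) < (q:ℝ) := by exact_mod_cast (show 0 < q by omega)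
        have hkq' : (q:ℝ) + 1 ≤ (k:ℝ) := by exact_mod_cast hqk
        have hNreal : (N:ℝ) ≤ 2*(k:ℝ)/(ω*2^n') := by
          have c1 : ((((k-1)/q:ℕ)):ℝ) ≤ ((k-1:ℕ):ℝ)/(q:ℝ) := Nat.cast_div_le
          have c2 : ((k-1:ℕ):ℝ) = (k:ℝ) - 1 := by
            rw [Nat.cast_sub (by omega)]; norm_num
          have c3 : (N:ℝ) ≤ ((k:ℝ) - 1)/(q:ℝ) + 1 := by
            rw [hNd]
            push_cast
            rw [← c2]
            push_cast
            linarith only [c1]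
          have c4 : ((k:ℝ) - 1)/(q:ℝ) + 1 ≤ 2*(k:ℝ)/((q:ℝ)+1) :=
            nq_ineq (by exact_mod_cast hq1) hkq'
          have c5 : 2*(k:ℝ)/((q:ℝ)+1) ≤ 2*(k:ℝ)/(ω*2^n') := by
            apply div_le_div_of_nonneg_left (by positivity) (by positivity) hqgt.le
          linarith only [c3, c4, c5]
        have hMω : (L+(h:ℝ)*F*Cα) * ((q:ℝ)/2^n')^α ≤ (L+(h:ℝ)*F*Cα) * ω^α :=
          mul_le_mul_of_nonneg_left (Real.rpow_le_rpow (by positivity) hqω hα0.le) hK0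
        have hNM : (N:ℝ) * ((L+(h:ℝ)*F*Cα) * ((q:ℝ)/2^n')^α) ≤
            (2*(k:ℝ)/(ω*2^n')) * ((L+(h:ℝ)*F*Cα) * ω^α) :=
          mul_le_mul hNreal hMω hM0 (by positivity)
        refine le_trans hNM ?_
        have heq : (2*(k:ℝ)/(ω*2^n')) * ((L+(h:ℝ)*F*Cα) * ω^α) =
            2*(L+(h:ℝ)*F*Cα) * (((k:ℝ)/2^n') * ω^(α-1)) := by
          rw [Real.rpow_sub hω0, Real.rpow_one]
          field_simp
        rw [heq]
        exact mul_le_mul_of_nonneg_left ba1 (by linarith)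
      · -- unit steps
        have hM0' : (0:ℝ) ≤ ((h:ℝ)*F*Cα) * ((1:ℝ)/2^n')^α :=
          mul_nonneg hPpos.le (Real.rpow_nonneg (by positivity) _)
        have hpiece : ∀ a p : ℕ, a + p ≤ 2^n' → p ≤ 1 → ∀ i'',
            |y n' (a+p) i'' - y n' a i''| ≤ ((h:ℝ)*F*Cα) * ((1:ℝ)/2^n')^α := by
          intro a p hap hpq i''
          interval_cases p
          · simpa using hM0'
          · have happ : a < 2^n' := by omega
            rw [ydiff_eq x f y n' a (a+1) i'', phi_unit x f y hyrec happ i'', zero_add]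
            have hs1 := sumbound hx hF0 (fun l => hfb (y n' a) i'' l)
              (tmem (show a+1 ≤ 2^n' from hap)) (tmem (show a ≤ 2^n' by omega))
            rw [show |((a+1:ℕ):ℝ)/2^n' - ((a:ℕ):ℝ)/2^n'| = (1:ℝ)/2^n' by
              rw [show ((a+1:ℕ):ℝ)/2^n' - ((a:ℕ):ℝ)/2^n' = (1:ℝ)/2^n' by push_cast; ring]
              exact abs_of_nonneg (by positivity)] at hs1
            refine le_trans hs1 (le_of_eq (by ring))
        have hch := chain y n' 1 _ hM0' hpiece k r' k (by omega) hrk i'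
        refine le_trans hch ?_
        have e1 : ((1:ℝ)/2^n')^α = ((1:ℝ)/2^n')^(α-1) * ((1:ℝ)/2^n') := by
          have hh1 := Real.rpow_add (show (0:ℝ) < 1/2^n' by positivity) (α-1) 1
          rw [show α-1+1 = α by ring, Real.rpow_one] at hh1
          exact hh1
        have e2 : ((1:ℝ)/2^n')^(α-1) ≤ ω^(α-1) := by
          have hωle : ω ≤ (1:ℝ)/2^n' := ((lt_div_iff₀ h2pos).mpr (by linarith)).le
          exact Real.antitoneOn_rpow_Ioi_of_exponent_nonpos (by linarith)
            (Set.mem_Ioi.mpr hω0) (Set.mem_Ioi.mpr (by positivity)) hωle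
        have e3 : (k:ℝ)*((1:ℝ)/2^n')^α = ((k:ℝ)/2^n') * ((1:ℝ)/2^n')^(α-1) := by
          rw [e1]; field_simp
        calc (k:ℝ) * (((h:ℝ)*F*Cα) * ((1:ℝ)/2^n')^α)
            = ((h:ℝ)*F*Cα) * (((k:ℝ)/2^n') * ((1:ℝ)/2^n')^(α-1)) := by
              rw [show (k:ℝ) * (((h:ℝ)*F*Cα) * ((1:ℝ)/2^n')^α)
                = ((h:ℝ)*F*Cα) * ((k:ℝ)*((1:ℝ)/2^n')^α) by ring, e3]
          _ ≤ ((h:ℝ)*F*Cα) * (((k:ℝ)/2^n') * ω^(α-1)) :=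
              mul_le_mul_of_nonneg_left
                (mul_le_mul_of_nonneg_left e2 hδpos.le) hPpos.le
          _ ≤ ((h:ℝ)*F*Cα) * (ω^(-α) * ((k:ℝ)/2^n')^(2*α)) :=
              mul_le_mul_of_nonneg_left ba1 hPpos.le
          _ ≤ 2*(L+(h:ℝ)*F*Cα) * (ω^(-α) * ((k:ℝ)/2^n')^(2*α)) := by
              apply mul_le_mul_of_nonneg_right (by linarith)
              exact mul_nonneg (Real.rpow_nonneg hω0.le _)
                (Real.rpow_nonneg (by positivity) _)
    -- global constants
    have hLG : L ≤ G₂ := hG ▸ le_max_right _ _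
    have hAG : (2*ω^(-α) + ω^(-1-α)) * (L + (h:ℝ)*F*Cα) ≤ G₂ := hG ▸ le_max_left _ _
    have hωinv : ω^(-α) * ω^α = 1 := by
      rw [← Real.rpow_add hω0]; simp
    have hinv0 : (0:ℝ) ≤ ω^(-α) := Real.rpow_nonneg hω0.le _
    have hinv10 : (0:ℝ) ≤ ω^(-1-α) := Real.rpow_nonneg hω0.le _
    have hωαnn : (0:ℝ) ≤ ω^α := Real.rpow_nonneg hω0.le _
    have h2L : 2*L ≤ (2*ω^(-α) + ω^(-1-α)) * (L + (h:ℝ)*F*Cα) := by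
      rw [hPL]
      nlinarith [hωinv, mul_nonneg hinv0 hL0.le,
        mul_nonneg hinv10 (add_nonneg hL0.le (mul_nonneg hL0.le hωαnn))]
    -- final case analysis
    rcases le_or_gt r j with hrj | hjr
    · obtain ⟨k, rfl⟩ : ∃ k, j = r + k := ⟨j - r, by omega⟩
      have habs : |((r+k:ℕ):ℝ)/2^n - (r:ℝ)/2^n| = (k:ℝ)/2^n := by
        rw [show ((r+k:ℕ):ℝ)/2^n - (r:ℝ)/2^n = (k:ℝ)/2^n by push_cast; ring]
        exact abs_of_nonneg (by positivity)
      rw [habs]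
      have hδ2α0 : (0:ℝ) ≤ ((k:ℝ)/2^n)^(2*α) := Real.rpow_nonneg (by positivity) _
      rcases le_or_gt ((k:ℝ)/2^n) ω with hsm | hbg
      · refine le_trans (small k n r hj hsm i) ?_
        exact mul_le_mul_of_nonneg_right hLG hδ2α0
      · have h2pos : (0:ℝ) < (2:ℝ)^n := by positivity
        have hδ1 : (k:ℝ)/2^n ≤ 1 := by
          rw [div_le_one h2pos]; exact_mod_cast (show k ≤ 2^n by omega)
        obtain ⟨ba1, ba2, ba3⟩ := big_arith hα hα1 hω0 hbg hδ1
        have hyb := big k n r hj hbg i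
        have hs1 := sumbound hx hF0 (fun l => hfb (y n r) i l) (tmem hj) (tmem hr)
        rw [habs] at hs1
        have htri : |Phi x f y n r (r+k) i| ≤ |y n (r+k) i - y n r i| +
            |∑ l, f (y n r) i l * (x (((r+k:ℕ):ℝ)/2^n) l - x ((r:ℝ)/2^n) l)| := by
          simp only [Phi]
          exact abs_sub _ _
        have c2 : ((h:ℝ)*F*Cα) * (((k:ℝ)/2^n)^α) ≤
            (L+(h:ℝ)*F*Cα) * (ω^(-1-α) * ((k:ℝ)/2^n)^(2*α)) := by
          calc ((h:ℝ)*F*Cα) * (((k:ℝ)/2^n)^α)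
              ≤ ((h:ℝ)*F*Cα) * (ω^(-1-α) * ((k:ℝ)/2^n)^(2*α)) :=
                mul_le_mul_of_nonneg_left ba2 hPpos.le
            _ ≤ (L+(h:ℝ)*F*Cα) * (ω^(-1-α) * ((k:ℝ)/2^n)^(2*α)) :=
                mul_le_mul_of_nonneg_right (by linarith)
                  (mul_nonneg hinv10 hδ2α0)
        have c3 := mul_le_mul_of_nonneg_right hAG hδ2α0
        linarith only [htri, hyb, hs1, c2, c3]
    · obtain ⟨k, rfl⟩ : ∃ k, r = j + k := ⟨r - j, by omega⟩
      have hk1 : 1 ≤ k := by omega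
      have h2pos : (0:ℝ) < (2:ℝ)^n := by positivity
      have habs : |(j:ℝ)/2^n - ((j+k:ℕ):ℝ)/2^n| = (k:ℝ)/2^n := by
        rw [show (j:ℝ)/2^n - ((j+k:ℕ):ℝ)/2^n = -((k:ℝ)/2^n) by push_cast; ring, abs_neg]
        exact abs_of_nonneg (by positivity)
      rw [habs]
      have hδ2α0 : (0:ℝ) ≤ ((k:ℝ)/2^n)^(2*α) := Real.rpow_nonneg (by positivity) _
      have hδpos : (0:ℝ) < (k:ℝ)/2^n :=
        div_pos (by exact_mod_cast (show 0 < k by omega)) h2pos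
      rcases le_or_gt ((k:ℝ)/2^n) ω with hsm | hbg
      · -- small scale, reversed order
        have hfwd := small k n j hr hsm i
        have hydS := ydiff_small k n j hr hsm
        rw [phi_rev x f y n (j+k) j i]
        have hcrG0 : (0:ℝ) ≤ F₁ * (L*((k:ℝ)/2^n)^(2*α) +
            ((h:ℝ)*F*Cα)*((k:ℝ)/2^n)^α) :=
          mul_nonneg hF₁0 (add_nonneg (mul_nonneg hL0.le hδ2α0)
            (mul_nonneg hPpos.le (Real.rpow_nonneg hδpos.le _)))
        have hcr := sumbound hx hcrG0
          (fun l => le_trans (hfl (y n j) (y n (j+k)) i l)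
            (mul_le_mul_of_nonneg_left
              (vnorm_le hd (fun l' => by rw [abs_sub_comm]; exact hydS l')) hF₁0))
          (tmem hj) (tmem hr)
        rw [habs] at hcr
        refine le_trans (abs_add_le _ _) ?_
        rw [abs_neg]
        have hQδ : ((h:ℝ)*F₁*Cα) * ((k:ℝ)/2^n)^α ≤ E := by
          calc ((h:ℝ)*F₁*Cα) * ((k:ℝ)/2^n)^α
              ≤ ((h:ℝ)*F₁*Cα) * ω^α :=
                mul_le_mul_of_nonneg_left
                  (Real.rpow_le_rpow hδpos.le hsm hα0.le) hQ0
            _ = E := hQω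
        have hδδ : ((k:ℝ)/2^n)^α * ((k:ℝ)/2^n)^α = ((k:ℝ)/2^n)^(2*α) := by
          rw [← Real.rpow_add hδpos]; ring_nf
        have t1 : (h:ℝ) * (F₁ * (L*((k:ℝ)/2^n)^(2*α) + ((h:ℝ)*F*Cα)*((k:ℝ)/2^n)^α)) *
            (Cα * ((k:ℝ)/2^n)^α) =
            (((h:ℝ)*F₁*Cα) * ((k:ℝ)/2^n)^α) * (L*((k:ℝ)/2^n)^(2*α)) +
            (((h:ℝ)*F₁*Cα) * ((k:ℝ)/2^n)^α) * (((h:ℝ)*F*Cα) * ((k:ℝ)/2^n)^α) := by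
          ring
        have t2 : (((h:ℝ)*F₁*Cα) * ((k:ℝ)/2^n)^α) * (((h:ℝ)*F*Cα) * ((k:ℝ)/2^n)^α)
            = E*L*((k:ℝ)/2^n)^(2*α) := by
          calc (((h:ℝ)*F₁*Cα) * ((k:ℝ)/2^n)^α) * (((h:ℝ)*F*Cα) * ((k:ℝ)/2^n)^α)
              = (((h:ℝ)*F₁*Cα) * ((h:ℝ)*F*Cα)) *
                (((k:ℝ)/2^n)^α * ((k:ℝ)/2^n)^α) := by ring
            _ = E*L*((k:ℝ)/2^n)^(2*α) := by rw [hQP, hδδ]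
        have c6 : (((h:ℝ)*F₁*Cα) * ((k:ℝ)/2^n)^α) * (L*((k:ℝ)/2^n)^(2*α)) ≤
            E*(L*((k:ℝ)/2^n)^(2*α)) :=
          mul_le_mul_of_nonneg_right hQδ (mul_nonneg hL0.le hδ2α0)
        have c3 := mul_le_mul_of_nonneg_right h2L hδ2α0
        have c4 := mul_le_mul_of_nonneg_right hAG hδ2α0
        have hLX0 : (0:ℝ) ≤ L * ((k:ℝ)/2^n)^(2*α) := mul_nonneg hL0.le hδ2α0
        have hmid : (h:ℝ) * (F₁ * (L*((k:ℝ)/2^n)^(2*α) +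
            ((h:ℝ)*F*Cα)*((k:ℝ)/2^n)^α)) * (Cα * ((k:ℝ)/2^n)^α) ≤
            E*(L*((k:ℝ)/2^n)^(2*α)) + E*L*((k:ℝ)/2^n)^(2*α) := by
          rw [t1, t2]
          exact add_le_add_left c6 _
        have h32 : L*((k:ℝ)/2^n)^(2*α) + (E*(L*((k:ℝ)/2^n)^(2*α)) +
            E*L*((k:ℝ)/2^n)^(2*α)) ≤ 2*(L*((k:ℝ)/2^n)^(2*α)) := by
          have hnn := mul_nonneg (show (0:ℝ) ≤ 1-2*E by linarith) hLX0
          linarith only [hnn]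
        linarith only [hfwd, hcr, hmid, h32, c3, c4]
      · -- big scale, reversed order
        have hδ1 : (k:ℝ)/2^n ≤ 1 := by
          rw [div_le_one h2pos]; exact_mod_cast (show k ≤ 2^n by omega)
        obtain ⟨ba1, ba2, ba3⟩ := big_arith hα hα1 hω0 hbg hδ1
        have hyb := big k n j hr hbg i
        have hyb' : |y n j i - y n (j+k) i| ≤
            2*(L+(h:ℝ)*F*Cα) * (ω^(-α) * ((k:ℝ)/2^n)^(2*α)) := by
          rw [abs_sub_comm]; exact hyb
        have hs1 := sumbound hx hF0 (fun l => hfb (y n (j+k)) i l) (tmem hj) (tmem hr)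
        rw [habs] at hs1
        have htri : |Phi x f y n (j+k) j i| ≤ |y n j i - y n (j+k) i| +
            |∑ l, f (y n (j+k)) i l * (x ((j:ℝ)/2^n) l - x (((j+k:ℕ):ℝ)/2^n) l)| := by
          simp only [Phi]
          exact abs_sub _ _
        have c2 : ((h:ℝ)*F*Cα) * (((k:ℝ)/2^n)^α) ≤
            (L+(h:ℝ)*F*Cα) * (ω^(-1-α) * ((k:ℝ)/2^n)^(2*α)) := by
          calc ((h:ℝ)*F*Cα) * (((k:ℝ)/2^n)^α)
              ≤ ((h:ℝ)*F*Cα) * (ω^(-1-α) * ((k:ℝ)/2^n)^(2*α)) :=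
                mul_le_mul_of_nonneg_left ba2 hPpos.le
            _ ≤ (L+(h:ℝ)*F*Cα) * (ω^(-1-α) * ((k:ℝ)/2^n)^(2*α)) :=
                mul_le_mul_of_nonneg_right (by linarith)
                  (mul_nonneg hinv10 hδ2α0)
        have c3 := mul_le_mul_of_nonneg_right hAG hδ2α0
        linarith only [htri, hyb', hs1, c2, c3]

end
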